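/- Let K ≥ 1 be the number of neighborhoods with sizes n_1,…,n_K ≥ 1, m_k = C(n_k,2), M = ∑_{k=1}^K m_k ≥ 1, N = max_k n_k, let X = ∏_{k=1}^K {0,1}^{m_k}, and let p be an exponential-family pmf with local dependence on X with sufficient statistic s : X → ℝ^d. Let q ≥ 1 and let J : ℝ^d → ℝ^q be a linear map (interpreted as the transposed gradient (∇_θ η(θ))ᵀ at the data-generating parameter) satisfying ‖J(s(x) − s(y))‖_∞ ≤ A·d(x,y)·N for all x,y ∈ X, where A > 0 and d is the Hamming distance. Then for every ε > 0, the probability under p that ‖J(s(X)) − E[J(s(X))]‖₂ ≥ ε·M is at most 2·q·exp(−ε²·M/(2·q·A²·N⁶)). -/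

import Mathlib

open scoped BigOperators

/-- The sample space of binary within-neighborhood edge variables. -/
abbrev Cfg (K : ℕ) (n : Fin K → ℕ) : Type :=
  (k : Fin K) → Fin (Nat.choose (n k) 2) → Bool

/-- Hamming distance between two configurations. -/
def hamDist {K : ℕ} {n : Fin K → ℕ} (x y : Cfg K n) : ℕ :=
  ∑ k, (Finset.univ.filter (fun e => x k e ≠ y k e)).card

open Finset

lemma exp_le_cosh_add {y c : ℝ} (hc : 0 < c) (hy : |y| ≤ c) :
    Real.exp y ≤ Real.cosh c + (y / c) * Real.sinh c := by
  have h1 : -c ≤ y := (abs_le.mp hy).1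
  have h2 : y ≤ c := (abs_le.mp hy).2
  have ha : (0:ℝ) ≤ (c - y) / (2 * c) := div_nonneg (by linarith) (by linarith)
  have hb : (0:ℝ) ≤ (c + y) / (2 * c) := div_nonneg (by linarith) (by linarith)
  have hc' : c ≠ 0 := hc.ne'
  have hab : (c - y) / (2 * c) + (c + y) / (2 * c) = 1 := by field_simp; ring
  have key := convexOn_exp.2 (Set.mem_univ (-c)) (Set.mem_univ c) ha hb hab
  have hyy : ((c - y) / (2 * c)) • (-c) + ((c + y) / (2 * c)) • c = y := by
    simp only [smul_eq_mul]
    rw [div_mul_eq_mul_div, div_mul_eq_mul_div, ← add_div, eq_comm,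
      eq_div_iff (by positivity)]
    ring
  rw [hyy] at key
  refine key.trans_eq ?_
  simp only [smul_eq_mul]
  rw [Real.cosh_eq, Real.sinh_eq]
  field_simp
  ring

-- one-step Hoeffding: weighted mgf of a bounded-range variable
lemma hoeffding_step {α : Type} [Fintype α] (v : α → ℝ) (hv0 : ∀ a, 0 ≤ v a)
    (hv1 : ∑ a, v a = 1) (h : α → ℝ) (c : ℝ)
    (hd : ∀ a b, |h a - h b| ≤ c) :
    ∑ a, v a * Real.exp (h a - ∑ b, v b * h b) ≤ Real.exp (c ^ 2 / 2) := by
  have hne : Nonempty α := by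
    by_contra hne
    rw [not_nonempty_iff] at hne
    simp [Finset.univ_eq_empty] at hv1
  set μ := ∑ b, v b * h b with hμ
  have hYzero : ∑ a, v a * (h a - μ) = 0 := by
    simp only [mul_sub, Finset.sum_sub_distrib, ← Finset.sum_mul, hv1, one_mul]
    ring
  have hY : ∀ a, |h a - μ| ≤ c := by
    intro a
    have e1 : h a - μ = ∑ b, v b * (h a - h b) := by
      simp only [mul_sub, Finset.sum_sub_distrib, ← Finset.sum_mul, hv1, one_mul, hμ]
    rw [e1]
    calc |∑ b, v b * (h a - h b)| ≤ ∑ b, |v b * (h a - h b)| := Finset.abs_sum_le_sum_abs _ _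
      _ ≤ ∑ b, v b * c := by
          apply Finset.sum_le_sum
          intro b _
          rw [abs_mul, abs_of_nonneg (hv0 b)]
          exact mul_le_mul_of_nonneg_left (hd a b) (hv0 b)
      _ = c := by rw [← Finset.sum_mul, hv1, one_mul]
  obtain a0 := hne.some
  have hc0 : 0 ≤ c := le_trans (abs_nonneg _) (hd a0 a0)
  rcases eq_or_lt_of_le hc0 with hc | hc
  · have hall : ∀ a, h a - μ = 0 := by
      intro a
      have := hY a
      rw [← hc] at this
      exact abs_eq_zero.mp (le_antisymm this (abs_nonneg _))
    calc ∑ a, v a * Real.exp (h a - μ) = ∑ a, v a := by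
          apply Finset.sum_congr rfl
          intro a _
          rw [hall a, Real.exp_zero, mul_one]
      _ = 1 := hv1
      _ ≤ Real.exp (c ^ 2 / 2) := by
          rw [← Real.exp_zero]
          apply Real.exp_le_exp.mpr
          positivity
  · calc ∑ a, v a * Real.exp (h a - μ)
        ≤ ∑ a, v a * (Real.cosh c + ((h a - μ) / c) * Real.sinh c) := by
          apply Finset.sum_le_sum
          intro a _
          exact mul_le_mul_of_nonneg_left (exp_le_cosh_add hc (hY a)) (hv0 a)
      _ = Real.cosh c := by
          simp only [mul_add, Finset.sum_add_distrib, ← Finset.sum_mul]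
          rw [hv1, one_mul]
          have : ∑ a, v a * ((h a - μ) / c * Real.sinh c)
              = (∑ a, v a * (h a - μ)) * (Real.sinh c / c) := by
            rw [Finset.sum_mul]
            apply Finset.sum_congr rfl
            intro a _
            field_simp
          rw [this, hYzero, zero_mul, add_zero]
      _ ≤ Real.exp (c ^ 2 / 2) := Real.cosh_le_exp_half_sq c

-- sum over pi type of a product = product of sums
lemma sum_prod_pi {K : ℕ} {X : Fin K → Type} [∀ k, Fintype (X k)]
    (g : ∀ k, X k → ℝ) :
    ∑ x : ∀ k, X k, ∏ k, g k (x k) = ∏ k, ∑ a, g k a :=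
  (Fintype.prod_sum g).symm

-- splitting a sum over a pi type on Fin (K+1)
lemma sum_pi_succ {K : ℕ} {X : Fin (K + 1) → Type} [∀ k, Fintype (X k)]
    (F : (∀ k, X k) → ℝ) :
    ∑ x : ∀ k, X k, F x = ∑ a : X 0, ∑ y : ∀ i : Fin K, X i.succ, F (Fin.cons a y) := by
  rw [← Equiv.sum_comp (Fin.consEquiv X) F, Fintype.sum_prod_type]
  rfl

-- McDiarmid mgf bound, by induction on the number of independent blocks
lemma mgf_bound (K : ℕ) :
    ∀ (X : Fin K → Type), ∀ [inst : ∀ k, Fintype (X k)],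
    ∀ (w : ∀ k, X k → ℝ), (∀ k a, 0 ≤ w k a) → (∀ k, ∑ a, w k a = 1) →
    ∀ (f : (∀ k, X k) → ℝ) (c : Fin K → ℝ),
    (∀ (k : Fin K) (x y : ∀ j, X j), (∀ j, j ≠ k → x j = y j) → |f x - f y| ≤ c k) →
    ∑ x : ∀ k, X k, (∏ k, w k (x k)) *
        Real.exp (f x - ∑ y : ∀ k, X k, (∏ k, w k (y k)) * f y)
      ≤ Real.exp ((∑ k, (c k) ^ 2) / 2) := by
  induction K with
  | zero =>
    intro X inst w hw0 hw1 f c hc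
    simp
  | succ K ih =>
    intro X inst w hw0 hw1 f c hc
    set μ := ∑ y : ∀ k, X k, (∏ k, w k (y k)) * f y with hμdef
    set W' : (∀ i : Fin K, X i.succ) → ℝ := fun y => ∏ i, w i.succ (y i) with hW'
    have hW'0 : ∀ y, 0 ≤ W' y := fun y => Finset.prod_nonneg fun i _ => hw0 _ _
    have hW'1 : ∑ y, W' y = 1 := by
      rw [hW', sum_prod_pi]
      simp [hw1]
    set g : X 0 → ℝ := fun a => ∑ y, W' y * f (Fin.cons a y) with hg
    have hprodsplit : ∀ (a : X 0) (y : ∀ i : Fin K, X i.succ),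
        (∏ k, w k (Fin.cons a y k)) = w 0 a * W' y := by
      intro a y
      rw [Fin.prod_univ_succ]
      simp [hW']
    have hμ : μ = ∑ a, w 0 a * g a := by
      rw [hμdef, sum_pi_succ]
      apply Finset.sum_congr rfl
      intro a _
      rw [hg, Finset.mul_sum]
      apply Finset.sum_congr rfl
      intro y _
      rw [hprodsplit]
      ring
    -- inner mgf bound from ih for each fixed a
    have hinner : ∀ a : X 0,
        ∑ y, W' y * Real.exp (f (Fin.cons a y) - g a)
          ≤ Real.exp ((∑ i : Fin K, (c i.succ) ^ 2) / 2) := by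
      intro a
      refine ih (fun i => X i.succ) (fun i => w i.succ) (fun i b => hw0 _ _)
        (fun i => hw1 _) (fun y => f (Fin.cons a y)) (fun i => c i.succ) ?_
      intro i x y hxy
      apply hc i.succ
      intro j hj
      rcases Fin.eq_zero_or_eq_succ j with rfl | ⟨j', rfl⟩
      · simp
      · simp only [Fin.cons_succ]
        exact hxy j' (fun hji => hj (by rw [hji]))
    -- main chain
    calc ∑ x : ∀ k, X k, (∏ k, w k (x k)) * Real.exp (f x - μ)
        = ∑ a, w 0 a * (Real.exp (g a - μ) *
            ∑ y, W' y * Real.exp (f (Fin.cons a y) - g a)) := by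
          rw [sum_pi_succ (fun x => (∏ k, w k (x k)) * Real.exp (f x - μ))]
          apply Finset.sum_congr rfl
          intro a _
          rw [Finset.mul_sum, Finset.mul_sum]
          apply Finset.sum_congr rfl
          intro y _
          rw [hprodsplit]
          rw [show f (Fin.cons a y) - μ = (f (Fin.cons a y) - g a) + (g a - μ) by ring,
            Real.exp_add]
          ring
      _ ≤ ∑ a, w 0 a * (Real.exp (g a - μ) * Real.exp ((∑ i : Fin K, (c i.succ) ^ 2) / 2)) := by
          apply Finset.sum_le_sum
          intro a _
          exact mul_le_mul_of_nonneg_left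
            (mul_le_mul_of_nonneg_left (hinner a) (Real.exp_nonneg _)) (hw0 _ _)
      _ = Real.exp ((∑ i : Fin K, (c i.succ) ^ 2) / 2) * ∑ a, w 0 a * Real.exp (g a - μ) := by
          rw [Finset.mul_sum]
          apply Finset.sum_congr rfl
          intro a _
          ring
      _ ≤ Real.exp ((∑ i : Fin K, (c i.succ) ^ 2) / 2) * Real.exp ((c 0) ^ 2 / 2) := by
          apply mul_le_mul_of_nonneg_left _ (Real.exp_nonneg _)
          rw [hμ]
          refine hoeffding_step (w 0) (hw0 0) (hw1 0) g (c 0) ?_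
          intro a b
          have hgd : g a - g b = ∑ y, W' y * (f (Fin.cons a y) - f (Fin.cons b y)) := by
            rw [hg]
            simp only [mul_sub, Finset.sum_sub_distrib]
          rw [hgd]
          calc |∑ y, W' y * (f (Fin.cons a y) - f (Fin.cons b y))|
              ≤ ∑ y, |W' y * (f (Fin.cons a y) - f (Fin.cons b y))| :=
                Finset.abs_sum_le_sum_abs _ _
            _ ≤ ∑ y, W' y * c 0 := by
                apply Finset.sum_le_sum
                intro y _
                rw [abs_mul, abs_of_nonneg (hW'0 y)]
                refine mul_le_mul_of_nonneg_left ?_ (hW'0 y)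
                apply hc 0
                intro j hj
                rcases Fin.eq_zero_or_eq_succ j with rfl | ⟨j', rfl⟩
                · exact absurd rfl hj
                · simp
            _ = c 0 := by rw [← Finset.sum_mul, hW'1, one_mul]
      _ = Real.exp ((∑ k : Fin (K + 1), (c k) ^ 2) / 2) := by
          rw [← Real.exp_add, Fin.sum_univ_succ]
          ring_nf

-- Chernoff bound from the mgf bound
lemma chernoff {K : ℕ} {X : Fin K → Type} [∀ k, Fintype (X k)]
    (w : ∀ k, X k → ℝ) (hw0 : ∀ k a, 0 ≤ w k a) (hw1 : ∀ k, ∑ a, w k a = 1)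
    (f : (∀ k, X k) → ℝ) (c : Fin K → ℝ)
    (hc : ∀ (k : Fin K) (x y : ∀ j, X j), (∀ j, j ≠ k → x j = y j) → |f x - f y| ≤ c k)
    (t : ℝ) (ht : 0 ≤ t) (S : ℝ) (hS : S = ∑ k, (c k) ^ 2) (hS0 : 0 < S) :
    ∑ x : ∀ k, X k,
        (if t ≤ f x - ∑ y : ∀ k, X k, (∏ k, w k (y k)) * f y then (∏ k, w k (x k)) else 0)
      ≤ Real.exp (-(t ^ 2) / (2 * S)) := by
  set μ := ∑ y : ∀ k, X k, (∏ k, w k (y k)) * f y with hμ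
  set L : ℝ := t / S with hL
  have hL0 : 0 ≤ L := div_nonneg ht hS0.le
  clear_value μ L
  have key := mgf_bound K X w hw0 hw1 (fun x => L * f x) (fun k => L * c k) (by
    intro k x y hxy
    have := hc k x y hxy
    calc |L * f x - L * f y| = L * |f x - f y| := by
          rw [← mul_sub, abs_mul, abs_of_nonneg hL0]
      _ ≤ L * c k := mul_le_mul_of_nonneg_left this hL0)
  have hEL : ∑ y : ∀ k, X k, (∏ k, w k (y k)) * (L * f y) = L * μ := by
    rw [hμ, Finset.mul_sum]
    apply Finset.sum_congr rfl
    intro y _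
    ring
  rw [hEL] at key
  have step1 : ∑ x : ∀ k, X k, (if t ≤ f x - μ then (∏ k, w k (x k)) else 0)
      ≤ ∑ x : ∀ k, X k, (∏ k, w k (x k)) * Real.exp (L * f x - L * μ - L * t) := by
    apply Finset.sum_le_sum
    intro x _
    have hWx : 0 ≤ ∏ k, w k (x k) := Finset.prod_nonneg fun k _ => hw0 _ _
    by_cases hx : t ≤ f x - μ
    · rw [if_pos hx]
      apply le_mul_of_one_le_right hWx
      rw [← Real.exp_zero]
      apply Real.exp_le_exp.mpr
      nlinarith
    · rw [if_neg hx]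
      positivity
  have step2 : ∑ x : ∀ k, X k, (∏ k, w k (x k)) * Real.exp (L * f x - L * μ - L * t)
      = Real.exp (-(L * t)) * ∑ x : ∀ k, X k, (∏ k, w k (x k)) * Real.exp (L * f x - L * μ) := by
    rw [Finset.mul_sum]
    apply Finset.sum_congr rfl
    intro x _
    rw [show L * f x - L * μ - L * t = (L * f x - L * μ) + (-(L * t)) by ring, Real.exp_add]
    ring
  have step3 : Real.exp (-(L * t)) *
        (∑ x : ∀ k, X k, (∏ k, w k (x k)) * Real.exp (L * f x - L * μ))
      ≤ Real.exp (-(L * t)) * Real.exp ((∑ k, (L * c k) ^ 2) / 2) :=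
    mul_le_mul_of_nonneg_left key (Real.exp_nonneg _)
  have hfinal : Real.exp (-(L * t)) * Real.exp ((∑ k, (L * c k) ^ 2) / 2)
      = Real.exp (-(t ^ 2) / (2 * S)) := by
    rw [← Real.exp_add]
    congr 1
    have : ∑ k, (L * c k) ^ 2 = L ^ 2 * S := by
      rw [hS, Finset.mul_sum]
      apply Finset.sum_congr rfl
      intro k _
      ring
    rw [this, hL]
    field_simp
    ring
  calc ∑ x : ∀ k, X k, (if t ≤ f x - μ then (∏ k, w k (x k)) else 0)
      ≤ _ := step1
    _ = _ := step2
    _ ≤ _ := step3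
    _ = _ := hfinal

lemma hamDist_le_choose {K : ℕ} {n : Fin K → ℕ} (x y : Cfg K n) (k : Fin K)
    (h : ∀ j, j ≠ k → x j = y j) : hamDist x y ≤ Nat.choose (n k) 2 := by
  unfold hamDist
  rw [Finset.sum_eq_single k]
  · calc (Finset.univ.filter (fun e => x k e ≠ y k e)).card
        ≤ Finset.univ.card := Finset.card_filter_le _ _
      _ = Nat.choose (n k) 2 := by simp
  · intro j _ hj
    rw [h j hj]
    simp
  · intro hk
    exact absurd (Finset.mem_univ k) hk


set_option maxHeartbeats 1600000 in
/-- Proposition 3 of the paper, with the unspecified constant made explicit: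
concentration of the score vector `J(s(X) − E s(X))`, where `s` is the (blockwise)
sufficient statistic of an exponential-family pmf with local dependence and the
linear map `J` is the transposed gradient `(∇_θ η(θ))ᵀ` at the data-generating
parameter.  If `‖J(s(x) − s(y))‖_∞ ≤ A·d(x,y)·N`, then for every `ε > 0`,
`P(‖J(s(X)) − E[J(s(X))]‖₂ ≥ ε·M) ≤ 2·q·exp(−ε²·M/(2·q·A²·N⁶))`. -/
theorem statement3
    (K : ℕ) (hK : 1 ≤ K)
    (n : Fin K → ℕ) (hn : ∀ k, 1 ≤ n k)
    (hM : 1 ≤ ∑ k, Nat.choose (n k) 2)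
    (N : ℕ) (hNub : ∀ k, n k ≤ N) (hNmem : ∃ k, n k = N)
    (dk : Fin K → ℕ)
    (η : (k : Fin K) → Fin (dk k) → ℝ)
    (sk : (k : Fin K) → (Fin (Nat.choose (n k) 2) → Bool) → Fin (dk k) → ℝ)
    (Z : ℝ)
    (hZ : Z = ∑ x : Cfg K n, Real.exp (∑ k, ∑ i, η k i * sk k (x k) i))
    (p : Cfg K n → ℝ)
    (hp : ∀ x, p x = Real.exp (∑ k, ∑ i, η k i * sk k (x k) i) / Z)
    (s : Cfg K n → ((Σ k : Fin K, Fin (dk k)) → ℝ))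
    (hs : ∀ (x : Cfg K n) (k : Fin K) (i : Fin (dk k)), s x ⟨k, i⟩ = sk k (x k) i)
    (q : ℕ) (hq : 1 ≤ q)
    (J : ((Σ k : Fin K, Fin (dk k)) → ℝ) →ₗ[ℝ] (Fin q → ℝ))
    (A : ℝ) (hA : 0 < A)
    (hJ : ∀ (x y : Cfg K n) (i : Fin q),
      |J (s x - s y) i| ≤ A * (hamDist x y : ℝ) * (N : ℝ)) :
    ∀ ε : ℝ, 0 < ε →
      (∑' x : {x : Cfg K n //
          ε * (∑ k, ((Nat.choose (n k) 2 : ℝ))) ≤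
            Real.sqrt (∑ i, (J (s x) i - ∑ y : Cfg K n, p y * J (s y) i) ^ 2)}, p x.1) ≤
        2 * (q : ℝ) * Real.exp (-(ε ^ 2 * (∑ k, ((Nat.choose (n k) 2 : ℝ)))) /
          (2 * (q : ℝ) * A ^ 2 * (N : ℝ) ^ 6)) := by
  intro ε hε
  classical
  haveI hne : Nonempty (Fin q) := ⟨⟨0, hq⟩⟩
  -- basic quantities
  set Mr : ℝ := ∑ k, ((Nat.choose (n k) 2 : ℝ)) with hMr
  have hMr1 : 1 ≤ Mr := by
    rw [hMr]
    calc (1:ℝ) = ((1:ℕ):ℝ) := by norm_num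
      _ ≤ ((∑ k, Nat.choose (n k) 2 : ℕ) : ℝ) := by exact_mod_cast hM
      _ = ∑ k, ((Nat.choose (n k) 2 : ℝ)) := by push_cast; rfl
  have hMr0 : 0 < Mr := lt_of_lt_of_le one_pos hMr1
  have hqR : (0:ℝ) < (q:ℝ) := by exact_mod_cast hq
  have hN1 : (1:ℝ) ≤ (N:ℝ) := by
    obtain ⟨k0, hk0⟩ := hNmem
    have := hn k0
    rw [hk0] at this
    exact_mod_cast this
  have hN0 : (0:ℝ) < (N:ℝ) := lt_of_lt_of_le one_pos hN1
  -- the blocks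
  set X : Fin K → Type := fun k => (Fin (Nat.choose (n k) 2) → Bool) with hX
  have hZk : ∀ k, (0:ℝ) < ∑ b : X k, Real.exp (∑ i, η k i * sk k b i) :=
    fun k => Finset.sum_pos (fun b _ => Real.exp_pos _) Finset.univ_nonempty
  set w : ∀ k, X k → ℝ := fun k b =>
    Real.exp (∑ i, η k i * sk k b i) / (∑ b' : X k, Real.exp (∑ i, η k i * sk k b' i)) with hw
  have hw0 : ∀ k b, 0 ≤ w k b := fun k b => div_nonneg (Real.exp_nonneg _) (hZk k).le
  have hw1 : ∀ k, ∑ b, w k b = 1 := by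
    intro k
    rw [hw]
    rw [← Finset.sum_div, div_self (hZk k).ne']
  -- Z is a product over blocks, so p is a product of block weights
  have hZprod : Z = ∏ k, ∑ b : X k, Real.exp (∑ i, η k i * sk k b i) := by
    rw [hZ, ← sum_prod_pi (fun k b => Real.exp (∑ i, η k i * sk k b i))]
    apply Finset.sum_congr rfl
    intro x _
    rw [Real.exp_sum]
  have hpW : ∀ x : Cfg K n, p x = ∏ k, w k (x k) := by
    intro x
    rw [hp, hZprod, hw]
    rw [Real.exp_sum, Finset.prod_div_distrib]
  have hp0 : ∀ x, 0 ≤ p x := by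
    intro x
    rw [hpW]
    exact Finset.prod_nonneg fun k _ => hw0 _ _
  -- coordinates of the score
  set μ : Fin q → ℝ := fun i => ∑ y : Cfg K n, p y * J (s y) i with hμ
  set c : Fin K → ℝ := fun k => A * ((Nat.choose (n k) 2 : ℝ)) * (N:ℝ) with hc
  set S : ℝ := ∑ k, (c k) ^ 2 with hS
  have hmN : ∀ k, ((Nat.choose (n k) 2 : ℝ)) ≤ (N:ℝ) ^ 2 := by
    intro k
    have h1 : Nat.choose (n k) 2 ≤ N * N := by
      calc Nat.choose (n k) 2 = n k * (n k - 1) / 2 := Nat.choose_two_right _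
        _ ≤ n k * (n k - 1) := Nat.div_le_self _ _
        _ ≤ n k * n k := Nat.mul_le_mul_left _ (Nat.sub_le _ _)
        _ ≤ N * N := Nat.mul_le_mul (hNub k) (hNub k)
    calc ((Nat.choose (n k) 2 : ℝ)) ≤ ((N * N : ℕ) : ℝ) := by exact_mod_cast h1
      _ = (N:ℝ) ^ 2 := by push_cast; ring
  have hm0 : ∀ k, (0:ℝ) ≤ ((Nat.choose (n k) 2 : ℝ)) := fun k => Nat.cast_nonneg _
  have hSle : S ≤ A ^ 2 * (N:ℝ) ^ 6 * Mr := by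
    rw [hS, hMr, Finset.mul_sum]
    apply Finset.sum_le_sum
    intro k _
    simp only [hc]
    have h1 := hmN k
    have h2 := hm0 k
    have hN46 : ((N:ℝ)) ^ 4 ≤ ((N:ℝ)) ^ 6 := pow_le_pow_right₀ hN1 (by norm_num)
    nlinarith [mul_le_mul_of_nonneg_left h1
        (by positivity : (0:ℝ) ≤ A ^ 2 * (N:ℝ) ^ 2 * ((Nat.choose (n k) 2 : ℝ))),
      mul_le_mul_of_nonneg_left hN46
        (by positivity : (0:ℝ) ≤ A ^ 2 * ((Nat.choose (n k) 2 : ℝ)))]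
  have hS0 : 0 < S := by
    obtain ⟨k0, hk0⟩ : ∃ k, 1 ≤ Nat.choose (n k) 2 := by
      by_contra hcon
      push_neg at hcon
      have hz : ∑ k, Nat.choose (n k) 2 = 0 := by
        apply Finset.sum_eq_zero
        intro k _
        exact Nat.lt_one_iff.mp (hcon k)
      omega
    refine Finset.sum_pos' (fun k _ => sq_nonneg _) ⟨k0, Finset.mem_univ k0, ?_⟩
    have hck : 0 < c k0 := by
      rw [hc]
      have : (1:ℝ) ≤ ((Nat.choose (n k0) 2 : ℝ)) := by exact_mod_cast hk0
      positivity
    positivity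
  set t : ℝ := ε * Mr / Real.sqrt q with ht
  have hsq : Real.sqrt (q:ℝ) > 0 := Real.sqrt_pos.mpr hqR
  have ht0 : 0 < t := by rw [ht]; positivity
  have ht2 : t ^ 2 = ε ^ 2 * Mr ^ 2 / q := by
    rw [ht, div_pow, Real.sq_sqrt hqR.le]
    ring
  -- bounded differences for each coordinate
  have hbd : ∀ (i : Fin q) (x y : Cfg K n) (k : Fin K), (∀ j, j ≠ k → x j = y j) →
      |J (s x) i - J (s y) i| ≤ c k := by
    intro i x y k hxy
    have hJi : J (s x - s y) i = J (s x) i - J (s y) i := by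
      rw [map_sub]
      rfl
    have h1 := hJ x y i
    rw [hJi] at h1
    refine h1.trans ?_
    rw [hc]
    have hd : (hamDist x y : ℝ) ≤ ((Nat.choose (n k) 2 : ℝ)) := by
      exact_mod_cast hamDist_le_choose x y k hxy
    have : A * (hamDist x y : ℝ) ≤ A * ((Nat.choose (n k) 2 : ℝ)) :=
      mul_le_mul_of_nonneg_left hd hA.le
    exact mul_le_mul_of_nonneg_right this hN0.le
  -- Chernoff for each coordinate and sign
  set B : ℝ := Real.exp (-(t ^ 2) / (2 * S)) with hB
  have hEW : ∀ F : Cfg K n → ℝ,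
      ∑ y : Cfg K n, (∏ k, w k (y k)) * F y = ∑ y : Cfg K n, p y * F y := by
    intro F
    apply Finset.sum_congr rfl
    intro y _
    rw [hpW]
  have hsum1 : ∀ i : Fin q, ∑ y : Cfg K n, (∏ k, w k (y k)) * J (s y) i = μ i := by
    intro i
    simp only [hμ]
    exact hEW (fun y => J (s y) i)
  have hsumneg : ∀ i : Fin q, ∑ y : Cfg K n, (∏ k, w k (y k)) * (-(J (s y) i)) = -(μ i) := by
    intro i
    rw [← hsum1 i, ← Finset.sum_neg_distrib]
    apply Finset.sum_congr rfl
    intro y _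
    ring
  have hT1 : ∀ i : Fin q,
      (∑ x : Cfg K n, if t ≤ J (s x) i - μ i then p x else 0) ≤ B := by
    intro i
    have hch := chernoff w hw0 hw1 (fun x => J (s x) i) c
      (fun k x y hxy => hbd i x y k hxy) t ht0.le S hS hS0
    rw [hB]
    refine le_trans (le_of_eq ?_) hch
    apply Finset.sum_congr rfl
    intro x _
    refine if_congr ?_ (hpW x) rfl
    rw [hsum1 i]
  have hT2 : ∀ i : Fin q,
      (∑ x : Cfg K n, if t ≤ -(J (s x) i - μ i) then p x else 0) ≤ B := by
    intro i
    have hch := chernoff w hw0 hw1 (fun x => -(J (s x) i)) c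
      (fun k x y hxy => by
        have h := hbd i x y k hxy
        rw [abs_sub_comm] at h
        simpa [neg_add_eq_sub] using h) t ht0.le S hS hS0
    rw [hB]
    refine le_trans (le_of_eq ?_) hch
    apply Finset.sum_congr rfl
    intro x _
    refine if_congr ?_ (hpW x) rfl
    rw [hsumneg i]
    simp only [sub_neg_eq_add, neg_sub]
    constructor <;> intro h <;> linarith
  have hite0 : ∀ (x : Cfg K n) (P : Prop) (inst : Decidable P), 0 ≤ (if P then p x else 0) := by
    intro x P inst
    split_ifs
    · exact hp0 x
    · exact le_rfl
  -- union bound pointwise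
  have hpoint : ∀ x : Cfg K n,
      (if ε * Mr ≤ Real.sqrt (∑ i, (J (s x) i - μ i) ^ 2) then p x else 0)
        ≤ ∑ i : Fin q, ((if t ≤ J (s x) i - μ i then p x else 0)
            + (if t ≤ -(J (s x) i - μ i) then p x else 0)) := by
    intro x
    by_cases hx : ε * Mr ≤ Real.sqrt (∑ i, (J (s x) i - μ i) ^ 2)
    · rw [if_pos hx]
      have hsum2 : (ε * Mr) ^ 2 ≤ ∑ i, (J (s x) i - μ i) ^ 2 := by
        have h0 : (0:ℝ) ≤ ∑ i, (J (s x) i - μ i) ^ 2 :=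
          Finset.sum_nonneg fun i _ => sq_nonneg _
        exact (Real.le_sqrt (by positivity) h0).mp hx
      obtain ⟨i0, hi0⟩ : ∃ i : Fin q, t ≤ |J (s x) i - μ i| := by
        by_contra hcon
        push_neg at hcon
        have hlt : ∑ i, (J (s x) i - μ i) ^ 2 < ∑ _i : Fin q, t ^ 2 := by
          apply Finset.sum_lt_sum_of_nonempty
          · exact Finset.univ_nonempty
          · intro i _
            have h1 := hcon i
            nlinarith [abs_nonneg (J (s x) i - μ i), sq_abs (J (s x) i - μ i)]
        rw [Finset.sum_const, Finset.card_univ, Fintype.card_fin, nsmul_eq_mul, ht2] at hlt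
        have heq : (q:ℝ) * (ε ^ 2 * Mr ^ 2 / q) = (ε * Mr) ^ 2 := by
          field_simp
        rw [heq] at hlt
        linarith
      have hpair : p x ≤ (if t ≤ J (s x) i0 - μ i0 then p x else 0)
          + (if t ≤ -(J (s x) i0 - μ i0) then p x else 0) := by
        rcases le_abs.mp hi0 with hv | hv
        · rw [if_pos hv]
          have := hite0 x (t ≤ -(J (s x) i0 - μ i0)) inferInstance
          linarith
        · rw [if_pos (show t ≤ -(J (s x) i0 - μ i0) by linarith)]
          have := hite0 x (t ≤ J (s x) i0 - μ i0) inferInstance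
          linarith
      refine le_trans hpair (Finset.single_le_sum (f := fun i =>
        (if t ≤ J (s x) i - μ i then p x else 0)
          + (if t ≤ -(J (s x) i - μ i) then p x else 0)) ?_ (Finset.mem_univ i0))
      intro i _
      exact add_nonneg (hite0 x _ _) (hite0 x _ _)
    · rw [if_neg hx]
      apply Finset.sum_nonneg
      intro i _
      exact add_nonneg (hite0 x _ _) (hite0 x _ _)
  have hunion : (∑ x : Cfg K n,
      if ε * Mr ≤ Real.sqrt (∑ i, (J (s x) i - μ i) ^ 2) then p x else 0) ≤ 2 * q * B := by
    calc ∑ x : Cfg K n, (if ε * Mr ≤ Real.sqrt (∑ i, (J (s x) i - μ i) ^ 2) then p x else 0)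
        ≤ ∑ x : Cfg K n, ∑ i : Fin q, ((if t ≤ J (s x) i - μ i then p x else 0)
            + (if t ≤ -(J (s x) i - μ i) then p x else 0)) :=
          Finset.sum_le_sum fun x _ => hpoint x
      _ = ∑ i : Fin q, ∑ x : Cfg K n, ((if t ≤ J (s x) i - μ i then p x else 0)
            + (if t ≤ -(J (s x) i - μ i) then p x else 0)) := Finset.sum_comm
      _ = ∑ i : Fin q, ((∑ x : Cfg K n, if t ≤ J (s x) i - μ i then p x else 0)
            + (∑ x : Cfg K n, if t ≤ -(J (s x) i - μ i) then p x else 0)) := by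
          apply Finset.sum_congr rfl
          intro i _
          rw [Finset.sum_add_distrib]
      _ ≤ ∑ _i : Fin q, (B + B) := Finset.sum_le_sum fun i _ => add_le_add (hT1 i) (hT2 i)
      _ = 2 * q * B := by
          rw [Finset.sum_const, Finset.card_univ, Fintype.card_fin, nsmul_eq_mul]
          ring
  have hfin : (∑' x : {x : Cfg K n //
        ε * Mr ≤ Real.sqrt (∑ i, (J (s x) i - μ i) ^ 2)}, p x.1)
      = ∑ x : Cfg K n, if ε * Mr ≤ Real.sqrt (∑ i, (J (s x) i - μ i) ^ 2) then p x else 0 := by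
    rw [tsum_fintype]
    calc ∑ x : {x : Cfg K n // ε * Mr ≤ Real.sqrt (∑ i, (J (s x) i - μ i) ^ 2)}, p x.1
        = ∑ x ∈ Finset.univ.filter
            (fun x : Cfg K n => ε * Mr ≤ Real.sqrt (∑ i, (J (s x) i - μ i) ^ 2)), p x :=
          (Finset.sum_subtype _ (fun x => by simp) p).symm
      _ = _ := Finset.sum_filter _ _
  have hexp : B ≤ Real.exp (-(ε ^ 2 * Mr) / (2 * (q:ℝ) * A ^ 2 * (N:ℝ) ^ 6)) := by
    rw [hB]
    apply Real.exp_le_exp.mpr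
    rw [neg_div, neg_div, neg_le_neg_iff,
      div_le_div_iff₀ (by positivity) (by positivity), ht2]
    have hr : ε ^ 2 * Mr ^ 2 / q * (2 * (q:ℝ) * A ^ 2 * (N:ℝ) ^ 6)
        = 2 * ε ^ 2 * Mr * (A ^ 2 * (N:ℝ) ^ 6 * Mr) := by
      field_simp
    rw [hr]
    nlinarith [mul_le_mul_of_nonneg_left hSle (show (0:ℝ) ≤ 2 * ε ^ 2 * Mr by positivity)]
  calc (∑' x : {x : Cfg K n //
        ε * Mr ≤ Real.sqrt (∑ i, (J (s x) i - μ i) ^ 2)}, p x.1)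
      ≤ 2 * q * B := le_trans (le_of_eq hfin) hunion
    _ ≤ 2 * (q:ℝ) * Real.exp (-(ε ^ 2 * Mr) / (2 * (q:ℝ) * A ^ 2 * (N:ℝ) ^ 6)) := by
        apply mul_le_mul_of_nonneg_left hexp
        positivity
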